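/- Every directed graph on a finite node set that is a strict partial order and satisfies the Envelope property is the p-graph of some p-skyline relation. -/

import Mathlib

/-- p-expressions over attribute set `ι`: atomic attribute preferences combined
by prioritized accumulation (`prio`, &) and Pareto accumulation (`pareto`, ⊗). -/
inductive PExpr (ι : Type*) where
  | atom : ι → PExpr ι
  | prio : PExpr ι → PExpr ι → PExpr ι
  | pareto : PExpr ι → PExpr ι → PExpr ι

namespace PExpr

/-- Relevant attributes of a p-expression. -/
def vars {ι : Type*} : PExpr ι → Set ι
  | atom i => {i}
  | prio e₁ e₂ => e₁.vars ∪ e₂.vars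
  | pareto e₁ e₂ => e₁.vars ∪ e₂.vars

/-- Well-formedness: at every accumulation the relevant attribute sets of the two
arguments are disjoint (so each attribute is used at most once). -/
def wf {ι : Type*} : PExpr ι → Prop
  | atom _ => True
  | prio e₁ e₂ => e₁.wf ∧ e₂.wf ∧ Disjoint e₁.vars e₂.vars
  | pareto e₁ e₂ => e₁.wf ∧ e₂.wf ∧ Disjoint e₁.vars e₂.vars

/-- Edge set of the p-graph of a p-expression. -/
def edges {ι : Type*} : PExpr ι → Set (ι × ι)
  | atom _ => ∅
  | prio e₁ e₂ => e₁.edges ∪ e₂.edges ∪ e₁.vars ×ˢ e₂.vars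
  | pareto e₁ e₂ => e₁.edges ∪ e₂.edges

/-- The tuple preference relation induced by a p-expression. -/
def rel {ι : Type*} {D : ι → Type*} [∀ i, LinearOrder (D i)] :
    PExpr ι → (∀ i, D i) → (∀ i, D i) → Prop
  | atom i, o, o' => o' i < o i
  | prio e₁ e₂, o, o' =>
      e₁.rel o o' ∨ ((∀ i ∈ e₁.vars, o i = o' i) ∧ e₂.rel o o')
  | pareto e₁ e₂, o, o' =>
      (e₁.rel o o' ∧ ∀ i ∈ e₂.vars, o i = o' i) ∨
      (e₂.rel o o' ∧ ∀ i ∈ e₁.vars, o i = o' i) ∨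
      (e₁.rel o o' ∧ e₂.rel o o')

end PExpr


set_option linter.unusedSectionVars false
namespace PSkyProof

variable {ι : Type*} [DecidableEq ι]

/-- Edge relation of graph `r` restricted to node set `s`. -/
def Rel (r : ι → ι → Prop) (s : Finset ι) (u v : ι) : Prop :=
  u ∈ s ∧ v ∈ s ∧ r u v

/-- Connectivity of graph `r` on node set `s`. -/
def Conn (r : ι → ι → Prop) (s : Finset ι) : Prop :=
  ∀ x ∈ s, ∀ y ∈ s, Relation.ReflTransGen (Rel r s) x y

/-- No induced path on four vertices. -/
def NoP4 (r : ι → ι → Prop) (s : Finset ι) : Prop :=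
  ∀ a b c d, a ∈ s → b ∈ s → c ∈ s → d ∈ s →
    a ≠ b → a ≠ c → a ≠ d → b ≠ c → b ≠ d → c ≠ d →
    r a b → r b c → r c d → ¬ r a c → ¬ r b d → ¬ r a d → False

/-- Complement graph. -/
def Compl (r : ι → ι → Prop) (x y : ι) : Prop := x ≠ y ∧ ¬ r x y

lemma compl_symm {r : ι → ι → Prop} (hsym : Symmetric r) : Symmetric (Compl r) :=
  fun _ _ ⟨hne, hnr⟩ => ⟨hne.symm, fun h => hnr (hsym h)⟩

lemma compl_irrefl {r : ι → ι → Prop} (x : ι) : ¬ Compl r x x := fun ⟨h, _⟩ => h rfl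

lemma rel_symm {r : ι → ι → Prop} (hsym : Symmetric r) (s : Finset ι) :
    Symmetric (Rel r s) := fun _ _ ⟨hu, hv, hr⟩ => ⟨hv, hu, hsym hr⟩

lemma noP4_mono {r : ι → ι → Prop} {s t : Finset ι} (hts : t ⊆ s) (h : NoP4 r s) :
    NoP4 r t := fun a b c d ha hb hc hd => h a b c d (hts ha) (hts hb) (hts hc) (hts hd)

lemma noP4_compl {r : ι → ι → Prop} {s : Finset ι} (hsym : Symmetric r)
    (hp4 : NoP4 r s) : NoP4 (Compl r) s := by
  intro a b c d ha hb hc hd hab hac had hbc hbd hcd eab ebc ecd nac nbd nad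
  have rac : r a c := by by_contra h; exact nac ⟨hac, h⟩
  have rbd : r b d := by by_contra h; exact nbd ⟨hbd, h⟩
  have rad : r a d := by by_contra h; exact nad ⟨had, h⟩
  exact hp4 c a d b hc ha hd hb hac.symm hcd hbc.symm had hab hbd.symm
    (hsym rac) rad (hsym rbd) ecd.2 eab.2 (fun h => ebc.2 (hsym h))

/-- On a path in `s` from inside `C` to outside `C`, where `C` is closed under
edges within `s.erase v`, some vertex of `C` is adjacent to `v`. -/
lemma crossing {r : ι → ι → Prop} {s : Finset ι} {v : ι} {C : Set ι}
    (hclosed : ∀ p q, p ∈ C → q ∈ s.erase v → r p q → q ∈ C)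
    {a b : ι} (h : Relation.ReflTransGen (Rel r s) a b)
    (hb : b ∉ C) (ha : a ∈ C) : ∃ p ∈ C, r p v := by
  induction h using Relation.ReflTransGen.head_induction_on with
  | refl => exact absurd ha hb
  | head step rest ih =>
    rename_i a' m
    obtain ⟨has, hms, hr⟩ := step
    by_cases hm : m = v
    · exact ⟨a', ha, hm ▸ hr⟩
    · exact ih (hclosed a' m ha (Finset.mem_erase.2 ⟨hm, hms⟩) hr)

/-- Along a path from a neighbour of `v` to a non-neighbour of `v`, there is an
edge `u u'` with `u` a neighbour and `u'` a non-neighbour. -/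
lemma pairfind {r : ι → ι → Prop} {t : Finset ι} {v p w : ι}
    (h : Relation.ReflTransGen (Rel r t) p w) (hw : ¬ r v w) (hp : r v p) :
    ∃ u u', Rel r t u u' ∧ r v u ∧ ¬ r v u' ∧ Relation.ReflTransGen (Rel r t) p u := by
  induction h using Relation.ReflTransGen.head_induction_on with
  | refl => exact absurd hp hw
  | head step rest ih =>
    rename_i p' m
    by_cases hm : r v m
    · obtain ⟨u, u', h1, h2, h3, h4⟩ := ih hm
      exact ⟨u, u', h1, h2, h3, h4.head step⟩
    · exact ⟨p', m, step, hp, hm, Relation.ReflTransGen.refl⟩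

lemma case1 {r : ι → ι → Prop} (hsym : Symmetric r) (hirr : ∀ x, ¬ r x x)
    {s : Finset ι} (hp4 : NoP4 r s) (hc : Conn r s) (hcc : Conn (Compl r) s)
    {v : ι} (hv : v ∈ s) (hnc : ¬ Conn r (s.erase v)) : False := by
  set t := s.erase v with ht
  have hts : t ⊆ s := Finset.erase_subset v s
  have rsym : Symmetric (Relation.ReflTransGen (Rel r t)) :=
    by haveI : Std.Symm (Rel r t) := ⟨rel_symm hsym t⟩; exact fun x y h => Std.Symm.symm x y h
  simp only [Conn, not_forall] at hnc
  obtain ⟨x, hx, y, hy, hxy⟩ := hnc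
  have hxs : x ∈ s := hts hx
  have hys : y ∈ s := hts hy
  have hxv : x ≠ v := Finset.ne_of_mem_erase hx
  -- a non-neighbour w of v inside t
  obtain ⟨w, hwt, hnvw⟩ : ∃ w, w ∈ t ∧ ¬ r v w := by
    have hpath := hcc v hv x hxs
    rcases Relation.ReflTransGen.cases_head hpath with heq | ⟨m, ⟨_, hms, hne, hnr⟩, _⟩
    · exact absurd heq.symm hxv
    · exact ⟨m, Finset.mem_erase.2 ⟨fun h => hne h.symm, hms⟩, hnr⟩
  -- a vertex o not reachable from w within t
  obtain ⟨o, hot, hwo⟩ : ∃ o, o ∈ t ∧ ¬ Relation.ReflTransGen (Rel r t) w o := by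
    by_cases h1 : Relation.ReflTransGen (Rel r t) w x
    · refine ⟨y, hy, fun h2 => hxy ?_⟩
      exact (rsym h1).trans h2
    · exact ⟨x, hx, h1⟩
  have hos : o ∈ s := hts hot
  have hws : w ∈ s := hts hwt
  -- neighbour p of v in the component of w
  obtain ⟨p, ⟨hpt, hwp⟩, hpv⟩ : ∃ p ∈ {z | z ∈ t ∧ Relation.ReflTransGen (Rel r t) w z}, r p v := by
    refine crossing ?_ (hc w hws o hos) ?_ ⟨hwt, Relation.ReflTransGen.refl⟩
    · rintro p q ⟨hpt, hwp⟩ hq hr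
      exact ⟨hq, hwp.tail ⟨hpt, hq, hr⟩⟩
    · exact fun h => hwo h.2
  -- neighbour z of v in the component of o
  obtain ⟨z, ⟨hzt, hoz⟩, hzv⟩ : ∃ z ∈ {z | z ∈ t ∧ Relation.ReflTransGen (Rel r t) o z}, r z v := by
    refine crossing ?_ (hc o hos w hws) ?_ ⟨hot, Relation.ReflTransGen.refl⟩
    · rintro p q ⟨hpt, hop⟩ hq hr
      exact ⟨hq, hop.tail ⟨hpt, hq, hr⟩⟩
    · exact fun h => hwo (rsym h.2)
  -- the critical edge u u'
  obtain ⟨u, u', ⟨hut, hu't, ruu'⟩, hvu, hnvu', hpu⟩ :=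
    pairfind (rsym hwp) hnvw (hsym hpv)
  have hwu : Relation.ReflTransGen (Rel r t) w u := hwp.trans hpu
  have hwu' : Relation.ReflTransGen (Rel r t) w u' := hwu.tail ⟨hut, hu't, ruu'⟩
  -- z is not reachable from w
  have hzNC : ¬ Relation.ReflTransGen (Rel r t) w z :=
    fun h => hwo (h.trans (rsym hoz))
  have hnuz : ¬ r u z := fun h => hzNC (hwu.tail ⟨hut, hzt, h⟩)
  have hnu'z : ¬ r u' z := fun h => hzNC (hwu'.tail ⟨hu't, hzt, h⟩)
  -- all distinctness
  have huu' : u ≠ u' := fun h => hirr u (h ▸ ruu')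
  have hu'v : u' ≠ v := Finset.ne_of_mem_erase hu't
  have huv : u ≠ v := Finset.ne_of_mem_erase hut
  have hzvne : v ≠ z := fun h => Finset.ne_of_mem_erase hzt h.symm
  have hu'z : u' ≠ z := fun h => hnvu' (h ▸ hsym hzv)
  have huz : u ≠ z := fun h => hzNC (h ▸ hwu)
  exact hp4 u' u v z (hts hu't) (hts hut) hv (hts hzt)
    huu'.symm hu'v hu'z huv huz hzvne
    (hsym ruu') (hsym hvu) (hsym hzv)
    (fun h => hnvu' (hsym h)) hnuz hnu'z

lemma seinsche {r : ι → ι → Prop} (hsym : Symmetric r) (hirr : ∀ x, ¬ r x x) :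
    ∀ s : Finset ι, NoP4 r s → 2 ≤ s.card → Conn r s → Conn (Compl r) s → False := by
  intro s
  induction s using Finset.strongInduction with
  | _ s ih =>
    intro hp4 hcard hc hcc
    obtain ⟨v, hv⟩ : s.Nonempty := Finset.card_pos.1 (by omega)
    set t := s.erase v with htdef
    have hts : t ⊆ s := Finset.erase_subset v s
    have htcard : t.card = s.card - 1 := Finset.card_erase_of_mem hv
    by_cases h2 : 2 ≤ t.card
    · have hssub : t ⊂ s := Finset.erase_ssubset hv
      by_cases hct : Conn r t
      · have hcct : ¬ Conn (Compl r) t :=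
          fun h => ih t hssub (noP4_mono hts hp4) h2 hct h
        have hcc' : Conn (Compl (Compl r)) s := by
          intro a ha b hb
          refine Relation.ReflTransGen.mono ?_ a b (hc a ha b hb)
          rintro u w ⟨hu, hw, hr⟩
          exact ⟨hu, hw, fun h => hirr u (h ▸ hr), fun h => h.2 hr⟩
        exact case1 (compl_symm hsym) compl_irrefl (noP4_compl hsym hp4) hcc hcc' hv hcct
      · exact case1 hsym hirr hp4 hc hcc hv hct
    · -- s has exactly two elements
      have h1 : t.card = 1 := by omega
      obtain ⟨x, hxt⟩ := Finset.card_eq_one.1 h1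
      have hx : x ∈ t := hxt ▸ Finset.mem_singleton_self x
      have hxv : x ≠ v := Finset.ne_of_mem_erase hx
      have hxs : x ∈ s := hts hx
      have hmem : ∀ m ∈ s, m = v ∨ m = x := by
        intro m hm
        by_cases hmv : m = v
        · exact Or.inl hmv
        · have : m ∈ t := Finset.mem_erase.2 ⟨hmv, hm⟩
          exact Or.inr (by simpa [hxt] using this)
      by_cases hr : r v x
      · rcases Relation.ReflTransGen.cases_head (hcc v hv x hxs) with heq | ⟨m, ⟨_, hms, hne, hnr⟩, _⟩
        · exact hxv heq.symm
        · rcases hmem m hms with rfl | rfl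
          · exact hne rfl
          · exact hnr hr
      · rcases Relation.ReflTransGen.cases_head (hc v hv x hxs) with heq | ⟨m, ⟨_, hms, hrm⟩, _⟩
        · exact hxv heq.symm
        · rcases hmem m hms with rfl | rfl
          · exact hirr _ hrm
          · exact hr hrm


section Poset

variable (Γ : Set (ι × ι))

/-- Comparability relation of the digraph `Γ`. -/
def comp (x y : ι) : Prop := (x, y) ∈ Γ ∨ (y, x) ∈ Γ

lemma comp_symm : Symmetric (comp Γ) := fun _ _ h => h.symm

variable {Γ}

lemma comp_irrefl (hirr : ∀ a, (a, a) ∉ Γ) (x : ι) : ¬ comp Γ x x := by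
  rintro (h | h) <;> exact hirr x h

lemma noP4_comp (hirr : ∀ a, (a, a) ∉ Γ)
    (htr : ∀ a b c, (a, b) ∈ Γ → (b, c) ∈ Γ → (a, c) ∈ Γ)
    (henv : ∀ a b c d : ι, a ≠ b → a ≠ c → a ≠ d → b ≠ c → b ≠ d → c ≠ d →
      (a, b) ∈ Γ → (c, d) ∈ Γ → (c, b) ∈ Γ →
      ((c, a) ∈ Γ ∨ (a, d) ∈ Γ ∨ (d, b) ∈ Γ))
    (s : Finset ι) : NoP4 (comp Γ) s := by
  intro a b c d _ _ _ _ hab hac had hbc hbd hcd cab cbc ccd nac nbd nad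
  have nac1 : (a, c) ∉ Γ := fun h => nac (Or.inl h)
  have nac2 : (c, a) ∉ Γ := fun h => nac (Or.inr h)
  have nbd1 : (b, d) ∉ Γ := fun h => nbd (Or.inl h)
  have nbd2 : (d, b) ∉ Γ := fun h => nbd (Or.inr h)
  have nad1 : (a, d) ∉ Γ := fun h => nad (Or.inl h)
  have nad2 : (d, a) ∉ Γ := fun h => nad (Or.inr h)
  rcases cab with h1 | h1 <;> rcases cbc with h2 | h2
  · exact nac1 (htr a b c h1 h2)
  · rcases ccd with h3 | h3
    · rcases henv a b c d hab hac had hbc hbd hcd h1 h3 h2 with h | h | h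
      · exact nac2 h
      · exact nad1 h
      · exact nbd2 h
    · exact nbd2 (htr d c b h3 h2)
  · rcases ccd with h3 | h3
    · exact nbd1 (htr b c d h2 h3)
    · rcases henv d c b a hcd.symm hbd.symm had.symm hbc.symm hac.symm hab.symm
        h3 h1 h2 with h | h | h
      · exact nbd1 h
      · exact nad2 h
      · exact nac1 h
  · exact nac2 (htr c b a h2 h1)

theorem build (hirr : ∀ a, (a, a) ∉ Γ)
    (htr : ∀ a b c, (a, b) ∈ Γ → (b, c) ∈ Γ → (a, c) ∈ Γ)
    (henv : ∀ a b c d : ι, a ≠ b → a ≠ c → a ≠ d → b ≠ c → b ≠ d → c ≠ d →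
      (a, b) ∈ Γ → (c, d) ∈ Γ → (c, b) ∈ Γ →
      ((c, a) ∈ Γ ∨ (a, d) ∈ Γ ∨ (d, b) ∈ Γ)) :
    ∀ (n : ℕ) (s : Finset ι), s.card ≤ n → s.Nonempty →
      ∃ e : PExpr ι, e.wf ∧ e.vars = ↑s ∧
        e.edges = {p : ι × ι | p ∈ Γ ∧ p.1 ∈ s ∧ p.2 ∈ s} := by
  have hasym : ∀ a b, (a, b) ∈ Γ → (b, a) ∈ Γ → False :=
    fun a b h h' => hirr a (htr a b a h h')
  intro n
  induction n with
  | zero =>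
    intro s hcard hne
    exact absurd (Finset.card_eq_zero.1 (Nat.le_zero.1 hcard)) hne.ne_empty
  | succ n ih =>
    intro s hcard hne
    classical
    by_cases h1 : s.card = 1
    · obtain ⟨i, rfl⟩ := Finset.card_eq_one.1 h1
      refine ⟨PExpr.atom i, trivial, by simp [PExpr.vars], ?_⟩
      ext ⟨p, q⟩
      simp only [PExpr.edges, Set.mem_empty_iff_false, Set.mem_setOf_eq,
        Finset.coe_singleton, Finset.mem_singleton, false_iff]
      rintro ⟨h, rfl, rfl⟩
      exact hirr _ h
    have h2 : 2 ≤ s.card := by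
      have := Finset.card_pos.2 hne; omega
    by_cases hconn : Conn (comp Γ) s
    · -- series case
      have hnic : ¬ Conn (Compl (comp Γ)) s := fun h =>
        seinsche (comp_symm Γ) (comp_irrefl hirr) s (noP4_comp hirr htr henv s) h2 hconn h
      unfold Conn at hnic
      push_neg at hnic
      obtain ⟨x, hxs, y, hys, hxy⟩ := hnic
      set IC := Compl (comp Γ) with hICdef
      set C : Finset ι := s.filter (fun z => Relation.ReflTransGen (Rel IC s) x z) with hCdef
      have hCs : C ⊆ s := Finset.filter_subset _ s
      have hCx : x ∈ C := Finset.mem_filter.2 ⟨hxs, Relation.ReflTransGen.refl⟩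
      have hyC : y ∉ C := fun h => hxy (Finset.mem_filter.1 h).2
      have hcompar : ∀ z ∈ s, z ∉ C → ∀ c ∈ C, comp Γ z c := by
        intro z hz hzC c hc
        by_contra h
        have hzc : z ≠ c := fun e => hzC (e ▸ hc)
        have : z ∈ C := Finset.mem_filter.2 ⟨hz,
          (Finset.mem_filter.1 hc).2.tail
            ⟨hCs hc, hz, hzc.symm, fun hcz => h (comp_symm Γ hcz)⟩⟩
        exact hzC this
      have hup : ∀ z, z ∈ s → z ∉ C → (z, x) ∈ Γ → ∀ c ∈ C, (z, c) ∈ Γ := by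
        intro z hz hzC hzx c hc
        obtain ⟨hcs, hrtg⟩ := Finset.mem_filter.1 hc
        clear hc hcs
        induction hrtg with
        | refl => exact hzx
        | tail hxu step ih2 =>
          rename_i u c'
          obtain ⟨hus, hc's, hne, hncomp⟩ := step
          rcases hcompar z hz hzC c'
              (Finset.mem_filter.2 ⟨hc's, hxu.tail ⟨hus, hc's, hne, hncomp⟩⟩) with h | h
          · exact h
          · exact absurd (Or.inr (htr c' z u h ih2)) hncomp
      have hdown : ∀ z, z ∈ s → z ∉ C → (x, z) ∈ Γ → ∀ c ∈ C, (c, z) ∈ Γ := by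
        intro z hz hzC hxz c hc
        obtain ⟨hcs, hrtg⟩ := Finset.mem_filter.1 hc
        clear hc hcs
        induction hrtg with
        | refl => exact hxz
        | tail hxu step ih2 =>
          rename_i u c'
          obtain ⟨hus, hc's, hne, hncomp⟩ := step
          rcases hcompar z hz hzC c'
              (Finset.mem_filter.2 ⟨hc's, hxu.tail ⟨hus, hc's, hne, hncomp⟩⟩) with h | h
          · exact absurd (Or.inl (htr u z c' ih2 h)) hncomp
          · exact h
      set U : Finset ι := (s \ C).filter (fun z => (z, x) ∈ Γ) with hUdef
      have hUs : U ⊆ s := (Finset.filter_subset _ _).trans (Finset.sdiff_subset)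
      have hUmem : ∀ z ∈ U, z ∈ s ∧ z ∉ C ∧ (z, x) ∈ Γ := by
        intro z hz
        obtain ⟨hz1, hz2⟩ := Finset.mem_filter.1 hz
        obtain ⟨hz3, hz4⟩ := Finset.mem_sdiff.1 hz1
        exact ⟨hz3, hz4, hz2⟩
      by_cases hU : U.Nonempty
      · -- cut (U, s \ U)
        have hxU : x ∉ U := fun h => (hUmem x h).2.1 hCx
        have hs2ne : (s \ U).Nonempty := ⟨x, Finset.mem_sdiff.2 ⟨hxs, hxU⟩⟩
        have hUss : U ⊂ s := Finset.ssubset_iff_of_subset hUs |>.2 ⟨x, hxs, hxU⟩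
        have hcard1 : U.card ≤ n := by
          have := Finset.card_lt_card hUss; omega
        have hcard2 : (s \ U).card ≤ n := by
          obtain ⟨u, hu⟩ := hU
          have : s \ U ⊂ s := Finset.ssubset_iff_of_subset Finset.sdiff_subset |>.2
            ⟨u, hUs hu, fun h => (Finset.mem_sdiff.1 h).2 hu⟩
          have := Finset.card_lt_card this; omega
        obtain ⟨e₁, hw1, hv1, he1⟩ := ih U hcard1 hU
        obtain ⟨e₂, hw2, hv2, he2⟩ := ih (s \ U) hcard2 hs2ne
        have hcross : ∀ p ∈ U, ∀ q ∈ s \ U, (p, q) ∈ Γ := by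
          intro p hp q hq
          obtain ⟨hps, hpC, hpx⟩ := hUmem p hp
          obtain ⟨hqs, hqU⟩ := Finset.mem_sdiff.1 hq
          by_cases hqC : q ∈ C
          · exact hup p hps hpC hpx q hqC
          · rcases hcompar q hqs hqC x hCx with h | h
            · exact absurd (Finset.mem_filter.2 ⟨Finset.mem_sdiff.2 ⟨hqs, hqC⟩, h⟩) hqU
            · exact htr p x q hpx h
        refine ⟨PExpr.prio e₁ e₂, ⟨hw1, hw2, ?_⟩, ?_, ?_⟩
        · rw [hv1, hv2]
          exact_mod_cast Finset.disjoint_coe.2 Finset.disjoint_sdiff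
        · show e₁.vars ∪ e₂.vars = ↑s
          rw [hv1, hv2, ← Finset.coe_union, Finset.union_sdiff_of_subset hUs]
        · show e₁.edges ∪ e₂.edges ∪ e₁.vars ×ˢ e₂.vars = _
          rw [hv1, hv2, he1, he2]
          ext ⟨p, q⟩
          simp only [Set.mem_union, Set.mem_setOf_eq, Set.mem_prod, Finset.mem_coe]
          constructor
          · rintro ((⟨h, hp, hq⟩ | ⟨h, hp, hq⟩) | ⟨hp, hq⟩)
            · exact ⟨h, hUs hp, hUs hq⟩
            · exact ⟨h, (Finset.mem_sdiff.1 hp).1, (Finset.mem_sdiff.1 hq).1⟩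
            · exact ⟨hcross p hp q hq, hUs hp, (Finset.mem_sdiff.1 hq).1⟩
          · rintro ⟨h, hp, hq⟩
            by_cases hpU : p ∈ U <;> by_cases hqU : q ∈ U
            · exact Or.inl (Or.inl ⟨h, hpU, hqU⟩)
            · exact Or.inr ⟨hpU, Finset.mem_sdiff.2 ⟨hq, hqU⟩⟩
            · exact absurd (hcross q hqU p (Finset.mem_sdiff.2 ⟨hp, hpU⟩))
                (fun h' => hasym p q h h')
            · exact Or.inl (Or.inr ⟨h, Finset.mem_sdiff.2 ⟨hp, hpU⟩,
                Finset.mem_sdiff.2 ⟨hq, hqU⟩⟩)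
      · -- U empty; cut (s \ D, D)
        set D : Finset ι := (s \ C).filter (fun z => (x, z) ∈ Γ) with hDdef
        have hDs : D ⊆ s := (Finset.filter_subset _ _).trans (Finset.sdiff_subset)
        have hDmem : ∀ z ∈ D, z ∈ s ∧ z ∉ C ∧ (x, z) ∈ Γ := by
          intro z hz
          obtain ⟨hz1, hz2⟩ := Finset.mem_filter.1 hz
          obtain ⟨hz3, hz4⟩ := Finset.mem_sdiff.1 hz1
          exact ⟨hz3, hz4, hz2⟩
        have hyD : y ∈ D := by
          rcases hcompar y hys hyC x hCx with h | h
          · exact absurd (⟨y, Finset.mem_filter.2 ⟨Finset.mem_sdiff.2 ⟨hys, hyC⟩, h⟩⟩ : U.Nonempty) hU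
          · exact Finset.mem_filter.2 ⟨Finset.mem_sdiff.2 ⟨hys, hyC⟩, h⟩
        have hD : D.Nonempty := ⟨y, hyD⟩
        have hxD : x ∉ D := fun h => (hDmem x h).2.1 hCx
        have hs1ne : (s \ D).Nonempty := ⟨x, Finset.mem_sdiff.2 ⟨hxs, hxD⟩⟩
        have hDss : D ⊂ s := Finset.ssubset_iff_of_subset hDs |>.2 ⟨x, hxs, hxD⟩
        have hcard2 : D.card ≤ n := by
          have := Finset.card_lt_card hDss; omega
        have hcard1 : (s \ D).card ≤ n := by
          have : s \ D ⊂ s := Finset.ssubset_iff_of_subset Finset.sdiff_subset |>.2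
            ⟨y, hys, fun h => (Finset.mem_sdiff.1 h).2 hyD⟩
          have := Finset.card_lt_card this; omega
        obtain ⟨e₁, hw1, hv1, he1⟩ := ih (s \ D) hcard1 hs1ne
        obtain ⟨e₂, hw2, hv2, he2⟩ := ih D hcard2 hD
        have hsubC : ∀ p ∈ s \ D, p ∈ C := by
          intro p hp
          obtain ⟨hps, hpD⟩ := Finset.mem_sdiff.1 hp
          by_contra hpC
          rcases hcompar p hps hpC x hCx with h | h
          · exact hU ⟨p, Finset.mem_filter.2 ⟨Finset.mem_sdiff.2 ⟨hps, hpC⟩, h⟩⟩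
          · exact hpD (Finset.mem_filter.2 ⟨Finset.mem_sdiff.2 ⟨hps, hpC⟩, h⟩)
        have hcross : ∀ p ∈ s \ D, ∀ q ∈ D, (p, q) ∈ Γ := by
          intro p hp q hq
          obtain ⟨hqs, hqC, hxq⟩ := hDmem q hq
          exact hdown q hqs hqC hxq p (hsubC p hp)
        refine ⟨PExpr.prio e₁ e₂, ⟨hw1, hw2, ?_⟩, ?_, ?_⟩
        · rw [hv1, hv2]
          exact_mod_cast Finset.disjoint_coe.2 Finset.sdiff_disjoint
        · show e₁.vars ∪ e₂.vars = ↑s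
          rw [hv1, hv2, ← Finset.coe_union, Finset.sdiff_union_of_subset hDs]
        · show e₁.edges ∪ e₂.edges ∪ e₁.vars ×ˢ e₂.vars = _
          rw [hv1, hv2, he1, he2]
          ext ⟨p, q⟩
          simp only [Set.mem_union, Set.mem_setOf_eq, Set.mem_prod, Finset.mem_coe]
          constructor
          · rintro ((⟨h, hp, hq⟩ | ⟨h, hp, hq⟩) | ⟨hp, hq⟩)
            · exact ⟨h, (Finset.mem_sdiff.1 hp).1, (Finset.mem_sdiff.1 hq).1⟩
            · exact ⟨h, hDs hp, hDs hq⟩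
            · exact ⟨hcross p hp q hq, (Finset.mem_sdiff.1 hp).1, hDs hq⟩
          · rintro ⟨h, hp, hq⟩
            by_cases hpD : p ∈ D <;> by_cases hqD : q ∈ D
            · exact Or.inl (Or.inr ⟨h, hpD, hqD⟩)
            · exact absurd (hcross q (Finset.mem_sdiff.2 ⟨hq, hqD⟩) p hpD)
                (fun h' => hasym p q h h')
            · exact Or.inr ⟨Finset.mem_sdiff.2 ⟨hp, hpD⟩, hqD⟩
            · exact Or.inl (Or.inl ⟨h, Finset.mem_sdiff.2 ⟨hp, hpD⟩,
                Finset.mem_sdiff.2 ⟨hq, hqD⟩⟩)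
    · -- parallel case
      unfold Conn at hconn
      push_neg at hconn
      obtain ⟨x, hxs, y, hys, hxy⟩ := hconn
      set C : Finset ι := s.filter (fun z => Relation.ReflTransGen (Rel (comp Γ) s) x z)
        with hCdef
      have hCs : C ⊆ s := Finset.filter_subset _ s
      have hCx : x ∈ C := Finset.mem_filter.2 ⟨hxs, Relation.ReflTransGen.refl⟩
      have hyC : y ∉ C := fun h => hxy (Finset.mem_filter.1 h).2
      have hnocross : ∀ p ∈ C, ∀ q ∈ s, q ∉ C → ¬ comp Γ p q := by
        intro p hp q hq hqC h
        exact hqC (Finset.mem_filter.2 ⟨hq, (Finset.mem_filter.1 hp).2.tail ⟨hCs hp, hq, h⟩⟩)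
      have hCne : C.Nonempty := ⟨x, hCx⟩
      have hs2ne : (s \ C).Nonempty := ⟨y, Finset.mem_sdiff.2 ⟨hys, hyC⟩⟩
      have hcard1 : C.card ≤ n := by
        have : C ⊂ s := Finset.ssubset_iff_of_subset hCs |>.2 ⟨y, hys, hyC⟩
        have := Finset.card_lt_card this; omega
      have hcard2 : (s \ C).card ≤ n := by
        have : s \ C ⊂ s := Finset.ssubset_iff_of_subset Finset.sdiff_subset |>.2
          ⟨x, hxs, fun h => (Finset.mem_sdiff.1 h).2 hCx⟩
        have := Finset.card_lt_card this; omega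
      obtain ⟨e₁, hw1, hv1, he1⟩ := ih C hcard1 hCne
      obtain ⟨e₂, hw2, hv2, he2⟩ := ih (s \ C) hcard2 hs2ne
      refine ⟨PExpr.pareto e₁ e₂, ⟨hw1, hw2, ?_⟩, ?_, ?_⟩
      · rw [hv1, hv2]
        exact_mod_cast Finset.disjoint_coe.2 Finset.disjoint_sdiff
      · show e₁.vars ∪ e₂.vars = ↑s
        rw [hv1, hv2, ← Finset.coe_union, Finset.union_sdiff_of_subset hCs]
      · show e₁.edges ∪ e₂.edges = _
        rw [he1, he2]
        ext ⟨p, q⟩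
        simp only [Set.mem_union, Set.mem_setOf_eq]
        constructor
        · rintro (⟨h, hp, hq⟩ | ⟨h, hp, hq⟩)
          · exact ⟨h, hCs hp, hCs hq⟩
          · exact ⟨h, (Finset.mem_sdiff.1 hp).1, (Finset.mem_sdiff.1 hq).1⟩
        · rintro ⟨h, hp, hq⟩
          by_cases hpC : p ∈ C <;> by_cases hqC : q ∈ C
          · exact Or.inl ⟨h, hpC, hqC⟩
          · exact absurd (Or.inl h) (hnocross p hpC q hq hqC)
          · exact absurd (Or.inr h) (hnocross q hqC p hp hpC)
          · exact Or.inr ⟨h, Finset.mem_sdiff.2 ⟨hp, hpC⟩, Finset.mem_sdiff.2 ⟨hq, hqC⟩⟩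

end Poset

end PSkyProof

/-- every directed graph on a finite node set that is a strict
partial order and satisfies the Envelope property is the p-graph of some
p-skyline relation (a well-formed p-expression using every attribute). -/
theorem pGraph_of_spo_envelope {ι : Type*} [Fintype ι] [Nonempty ι]
    (Γ : Set (ι × ι))
    (hirr : ∀ a, (a, a) ∉ Γ)
    (htr : ∀ a b c, (a, b) ∈ Γ → (b, c) ∈ Γ → (a, c) ∈ Γ)
    (henv : ∀ a b c d : ι, a ≠ b → a ≠ c → a ≠ d → b ≠ c → b ≠ d → c ≠ d →
      (a, b) ∈ Γ → (c, d) ∈ Γ → (c, b) ∈ Γ →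
      ((c, a) ∈ Γ ∨ (a, d) ∈ Γ ∨ (d, b) ∈ Γ)) :
    ∃ e : PExpr ι, e.wf ∧ e.vars = Set.univ ∧ e.edges = Γ := by
  classical
  obtain ⟨e, hwf, hv, he⟩ := PSkyProof.build hirr htr henv Finset.univ.card Finset.univ
    le_rfl Finset.univ_nonempty
  refine ⟨e, hwf, ?_, ?_⟩
  · rw [hv, Finset.coe_univ]
  · rw [he]; ext p; simp
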